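/- Let X be a symmetric n×n real matrix with all eigenvalues in the open interval (-1, 1). Then for every odd positive integer r, (1/2)(I - X) ⪯ I - X^r ⪯ r(I - X), and for every even positive integer r = 2k, (I - X²) ⪯ I - X^r ⪯ k(I - X²), where ⪯ denotes the Loewner order. -/

import Mathlib

open Matrix

private lemma cfc_psd {n : ℕ} {X : Matrix (Fin n) (Fin n) ℝ} (hH : X.IsHermitian)
    (f : ℝ → ℝ) (hf : ∀ μ ∈ spectrum ℝ X, 0 ≤ f μ) : (cfc f X).PosSemidef := by
  rw [hH.cfc_eq f, Matrix.IsHermitian.cfc, Unitary.conjStarAlgAut_apply, star_eq_conjTranspose]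
  refine Matrix.PosSemidef.mul_mul_conjTranspose_same ?_ _
  refine Matrix.PosSemidef.diagonal fun i => ?_
  simpa using hf _ (hH.eigenvalues_mem_spectrum_real i)

theorem stmt_19 (n : ℕ) (X : Matrix (Fin n) (Fin n) ℝ) (hX : X.IsSymm)
    (hspec : ∀ μ ∈ spectrum ℝ X, μ ∈ Set.Ioo (-1 : ℝ) 1) :
    (∀ r : ℕ, 0 < r → Odd r →
        ((1 - X ^ r) - (1 / 2 : ℝ) • (1 - X)).PosSemidef ∧
          ((r : ℝ) • (1 - X) - (1 - X ^ r)).PosSemidef) ∧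
      (∀ r k : ℕ, 0 < k → r = 2 * k →
        ((1 - X ^ r) - (1 - X ^ 2)).PosSemidef ∧
          ((k : ℝ) • (1 - X ^ 2) - (1 - X ^ r)).PosSemidef) := by
  have hH : X.IsHermitian := by
    rwa [Matrix.IsHermitian, conjTranspose_eq_transpose_of_trivial]
  have hsa : IsSelfAdjoint X := hH
  -- auxiliary sum bound
  have sum_le : ∀ (t : ℝ) (m : ℕ), -1 ≤ t → t ≤ 1 →
      (∑ i ∈ Finset.range m, t ^ i) ≤ m := by
    intro t m h1 h2
    calc (∑ i ∈ Finset.range m, t ^ i) ≤ ∑ i ∈ Finset.range m, (1 : ℝ) := by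
          refine Finset.sum_le_sum fun i _ => ?_
          calc t ^ i ≤ |t ^ i| := le_abs_self _
            _ = |t| ^ i := by rw [abs_pow]
            _ ≤ 1 := pow_le_one₀ (abs_nonneg t) (abs_le.mpr ⟨h1, h2⟩)
      _ = m := by simp
  have fac : ∀ (t : ℝ) (m : ℕ),
      1 - t ^ m = (1 - t) * ∑ i ∈ Finset.range m, t ^ i := by
    intro t m
    linear_combination geom_sum_mul t m
  constructor
  · intro r hr hodd
    constructor
    · have h : cfc (fun x : ℝ => (1 - x ^ r) - (1 / 2) * (1 - x)) X
          = (1 - X ^ r) - (1 / 2 : ℝ) • (1 - X) := by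
        rw [cfc_sub _ _ X, cfc_sub _ _ X, cfc_const_mul _ _ X, cfc_sub _ _ X,
          cfc_pow_id X r hsa, cfc_const_one ℝ X, cfc_id' ℝ X hsa]
      rw [← h]
      refine cfc_psd hH _ fun μ hμ => ?_
      obtain ⟨h1, h2⟩ := hspec μ hμ
      rcases le_or_gt 0 μ with hpos | hneg
      · have : μ ^ r ≤ μ := by
          calc μ ^ r ≤ μ ^ 1 := pow_le_pow_of_le_one hpos h2.le hr
            _ = μ := pow_one μ
        nlinarith
      · have : μ ^ r < 0 := hodd.pow_neg hneg
        nlinarith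
    · have h : cfc (fun x : ℝ => (r : ℝ) * (1 - x) - (1 - x ^ r)) X
          = (r : ℝ) • (1 - X) - (1 - X ^ r) := by
        rw [cfc_sub _ _ X, cfc_const_mul _ _ X, cfc_sub _ _ X, cfc_sub _ _ X,
          cfc_pow_id X r hsa, cfc_const_one ℝ X, cfc_id' ℝ X hsa]
      rw [← h]
      refine cfc_psd hH _ fun μ hμ => ?_
      obtain ⟨h1, h2⟩ := hspec μ hμ
      have hs := sum_le μ r h1.le h2.le
      have hf := fac μ r
      nlinarith [hs, hf, sub_pos.mpr h2]
  · intro r k hk hrk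
    subst hrk
    have hsq : ∀ μ : ℝ, μ ^ (2 * k) = (μ ^ 2) ^ k := fun μ => pow_mul μ 2 k
    constructor
    · have h : cfc (fun x : ℝ => (1 - x ^ (2 * k)) - (1 - x ^ 2)) X
          = (1 - X ^ (2 * k)) - (1 - X ^ 2) := by
        rw [cfc_sub _ _ X, cfc_sub _ _ X, cfc_sub _ _ X,
          cfc_pow_id X (2 * k) hsa, cfc_pow_id X 2 hsa, cfc_const_one ℝ X]
      rw [← h]
      refine cfc_psd hH _ fun μ hμ => ?_
      obtain ⟨h1, h2⟩ := hspec μ hμ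
      have hsq1 : μ ^ 2 ≤ 1 := by nlinarith
      have : (μ ^ 2) ^ k ≤ (μ ^ 2) ^ 1 :=
        pow_le_pow_of_le_one (sq_nonneg μ) hsq1 hk
      have h2' : (μ ^ 2) ^ k ≤ μ ^ 2 := by simpa using this
      rw [hsq μ]
      linarith
    · have h : cfc (fun x : ℝ => (k : ℝ) * (1 - x ^ 2) - (1 - x ^ (2 * k))) X
          = (k : ℝ) • (1 - X ^ 2) - (1 - X ^ (2 * k)) := by
        rw [cfc_sub _ _ X, cfc_const_mul _ _ X, cfc_sub _ _ X, cfc_sub _ _ X,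
          cfc_pow_id X (2 * k) hsa, cfc_pow_id X 2 hsa, cfc_const_one ℝ X]
      rw [← h]
      refine cfc_psd hH _ fun μ hμ => ?_
      obtain ⟨h1, h2⟩ := hspec μ hμ
      have hsq1 : μ ^ 2 ≤ 1 := by nlinarith
      have hs := sum_le (μ ^ 2) k (by nlinarith [sq_nonneg μ]) hsq1
      have hf := fac (μ ^ 2) k
      rw [hsq μ]
      nlinarith [hs, hf, sub_nonneg.mpr hsq1]
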